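/- Let Φ: [0,∞) → [0,∞) be continuous, non-decreasing, positive on (0,∞), of linear growth, with ∫₀₊ dx/Φ(x) = +∞. For ε > 0 let V^ε be the unique solution of V^ε(t) = 3∫ₜ¹ (Φ(V^ε(s)) + ε) ds on [0,1]. Then V^ε(t) → 0 as ε → 0, uniformly in t ∈ [0,1]. -/

import Mathlib

open MeasureTheory Set Filter Topology
open scoped ENNReal

/-- A continuous nonnegative solution on `[0,1]` of the backward integral equation
`u t = γ + ∫ₜ¹ (φ (u s) + ε) ds`. -/
def IsSolODE (φ : ℝ → ℝ) (ε γ : ℝ) (u : ℝ → ℝ) : Prop :=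
  ContinuousOn u (Set.Icc 0 1) ∧ (∀ t ∈ Set.Icc (0:ℝ) 1, 0 ≤ u t) ∧
    ∀ t ∈ Set.Icc (0:ℝ) 1, u t = γ + ∫ s in Set.Ioc t 1, (φ (u s) + ε)

/-- The Osgood condition `∫₀₊ dx / φ x = +∞`. -/
def OsgoodCondition (φ : ℝ → ℝ) : Prop :=
  ∀ δ > (0:ℝ), ∫⁻ x in Set.Ioc (0:ℝ) δ, ENNReal.ofReal (1 / φ x) = ⊤

/-- Key identity: a solution of `u t = 3∫ₜ¹ (Φ(u s)+ε) ds` is maximal at `0` and satisfies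
`∫₀^{u 0} dx/(3(Φ x + ε)) = 1`. -/
lemma stmt16_key (Φ : ℝ → ℝ) (hΦc : ContinuousOn Φ (Set.Ici 0))
    (hΦnn : ∀ x ≥ (0:ℝ), 0 ≤ Φ x)
    (ε : ℝ) (hε : 0 < ε) (u : ℝ → ℝ)
    (huc : ContinuousOn u (Set.Icc 0 1)) (hunn : ∀ t ∈ Set.Icc (0:ℝ) 1, 0 ≤ u t)
    (heq : ∀ t ∈ Set.Icc (0:ℝ) 1, u t = 3 * ∫ s in Set.Ioc t 1, (Φ (u s) + ε)) :
    (∀ t ∈ Set.Icc (0:ℝ) 1, u t ≤ u 0) ∧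
      (∫ x in Set.Ioc 0 (u 0), (3 * (Φ (max x 0) + ε))⁻¹) = 1 := by
  have h01 : (0:ℝ) ≤ 1 := zero_le_one
  set q : ℝ → ℝ := fun y => Φ (max y 0) + ε with hq
  have hqc : Continuous q := by
    have : Continuous fun y : ℝ => Φ (max y 0) :=
      hΦc.comp_continuous (continuous_id.max continuous_const) fun y => Set.mem_Ici.2 (le_max_right _ _)
    exact this.add continuous_const
  have hqpos : ∀ y, 0 < q y := fun y =>
    add_pos_of_nonneg_of_pos (hΦnn _ (le_max_right _ _)) hε
  -- extend u continuously to ℝ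
  set U : ℝ → ℝ := Set.IccExtend h01 ((Set.Icc (0:ℝ) 1).restrict u) with hU
  have hUc : Continuous U := huc.restrict.Icc_extend'
  have hUeq : ∀ t ∈ Set.Icc (0:ℝ) 1, U t = u t := fun t ht => by
    rw [hU, Set.IccExtend_of_mem h01 _ ht]; rfl
  set g : ℝ → ℝ := fun s => q (U s) with hg
  have hgc : Continuous g := hqc.comp hUc
  have hgpos : ∀ s, 0 < g s := fun s => hqpos _
  have hgeq : ∀ s ∈ Set.Icc (0:ℝ) 1, g s = Φ (u s) + ε := by
    intro s hs
    have : max (U s) 0 = u s := by rw [hUeq s hs, max_eq_left (hunn s hs)]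
    simp only [hg, hq, this]
  have heq' : ∀ t ∈ Set.Icc (0:ℝ) 1, u t = 3 * ∫ s in Set.Ioc t 1, g s := by
    intro t ht
    rw [heq t ht]
    congr 1
    refine (setIntegral_congr_fun measurableSet_Ioc fun s hs => ?_).symm
    exact hgeq s ⟨le_trans ht.1 (le_of_lt hs.1), hs.2⟩
  set w : ℝ → ℝ := fun t => 3 * ∫ s in t..1, g s with hwdef
  have hw : ∀ t ∈ Set.Icc (0:ℝ) 1, w t = u t := by
    intro t ht
    rw [heq' t ht, hwdef]
    simp only [intervalIntegral.integral_of_le ht.2]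
  have hw' : ∀ t, HasDerivAt w (-(3 * g t)) t := by
    intro t
    have h1 : HasDerivAt (fun x => ∫ s in (1:ℝ)..x, g s) (g t) t :=
      (hgc.integral_hasStrictDerivAt 1 t).hasDerivAt
    have h2 : HasDerivAt (fun x => ∫ s in x..1, g s) (-g t) t := by
      have := h1.neg
      refine this.congr_of_eventuallyEq (Filter.Eventually.of_forall fun x => ?_)
      exact intervalIntegral.integral_symm 1 x
    have := h2.const_mul 3
    rw [show -(3 * g t) = 3 * -g t by ring]
    exact this
  set ψ : ℝ → ℝ := fun y => (3 * q y)⁻¹ with hψ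
  have hψc : Continuous ψ :=
    (continuous_const.mul hqc).inv₀ fun y => by have := hqpos y; exact (mul_pos (by norm_num : (0:ℝ) < 3) this).ne'
  have hψnn : ∀ y, 0 ≤ ψ y := fun y => by have := hqpos y; positivity
  set F : ℝ → ℝ := fun y => ∫ x in (0:ℝ)..y, ψ x with hF
  have hF' : ∀ y, HasDerivAt F (ψ y) y := fun y =>
    (hψc.integral_hasStrictDerivAt 0 y).hasDerivAt
  set h : ℝ → ℝ := fun t => F (w t) + t with hh
  have hh' : ∀ t, HasDerivAt h (ψ (w t) * -(3 * g t) + 1) t := by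
    intro t
    exact ((hF' (w t)).comp t (hw' t)).add (hasDerivAt_id t)
  have hzero : ∀ t ∈ Set.Icc (0:ℝ) 1, ψ (w t) * -(3 * g t) + 1 = 0 := by
    intro t ht
    have h1 : w t = u t := hw t ht
    have h2 : g t = q (u t) := by
      simp only [hg, hUeq t ht]
    have h3 : ψ (w t) = (3 * q (u t))⁻¹ := by
      rw [h1, hψ]
    rw [h2, h3]
    have : (3 : ℝ) * q (u t) ≠ 0 := by have := hqpos (u t); positivity
    field_simp
    rw [div_self (hqpos (u t)).ne']; ring
  have hconst := constant_of_has_deriv_right_zero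
    (f := h) (a := 0) (b := 1)
    (continuous_iff_continuousAt.2 fun t => (hh' t).continuousAt).continuousOn
    (fun x hx => by
      have := (hh' x).hasDerivWithinAt (s := Set.Ici x)
      rwa [hzero x (Set.Ico_subset_Icc_self hx)] at this)
  have h10 : h 1 = h 0 := hconst 1 ⟨zero_le_one, le_refl 1⟩
  have hw1 : w 1 = 0 := by simp [hwdef, intervalIntegral.integral_same]
  have hF0 : F 0 = 0 := by simp [hF, intervalIntegral.integral_same]
  have hw0 : w 0 = u 0 := hw 0 ⟨le_refl 0, zero_le_one⟩
  have hFu0 : F (u 0) = 1 := by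
    have : h 1 = 1 := by simp [hh, hw1, hF0]
    have h0 : h 0 = F (u 0) := by simp [hh, hw0]
    rw [this, h0] at h10; linarith
  constructor
  · -- monotonicity
    intro t ht
    rw [heq' t ht, heq' 0 ⟨le_refl 0, zero_le_one⟩]
    have hint : IntegrableOn g (Set.Ioc 0 1) := hgc.integrableOn_Ioc
    have hmono : ∫ s in Set.Ioc t 1, g s ≤ ∫ s in Set.Ioc 0 1, g s := by
      apply setIntegral_mono_set hint
      · exact Filter.Eventually.of_forall fun s => (hgpos s).le
      · exact HasSubset.Subset.eventuallyLE (Set.Ioc_subset_Ioc_left ht.1)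
    linarith
  · -- integral identity
    have hu0 : 0 ≤ u 0 := hunn 0 ⟨le_refl 0, zero_le_one⟩
    have : F (u 0) = ∫ x in Set.Ioc 0 (u 0), ψ x := by
      show (∫ x in (0:ℝ)..(u 0), ψ x) = _
      rw [intervalIntegral.integral_of_le hu0]
    rw [← this]
    exact hFu0

/-- the solutions `V^ε` of `V^ε(t) = 3∫ₜ¹ (Φ(V^ε(s)) + ε) ds` tend
to `0` uniformly on `[0,1]` as `ε → 0⁺`. -/
theorem stmt16 (Φ : ℝ → ℝ) (a b : ℝ) (ha : 0 ≤ a) (hb : 0 ≤ b)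
    (hΦc : ContinuousOn Φ (Set.Ici 0)) (hΦm : MonotoneOn Φ (Set.Ici 0))
    (hΦnn : ∀ x ≥ (0:ℝ), 0 ≤ Φ x) (hΦpos : ∀ x > (0:ℝ), 0 < Φ x)
    (hΦgrow : ∀ x ≥ (0:ℝ), Φ x ≤ a * x + b) (hΦOsg : OsgoodCondition Φ)
    (V : ℝ → ℝ → ℝ)
    (hV : ∀ ε > (0:ℝ), ContinuousOn (V ε) (Set.Icc 0 1) ∧
      (∀ t ∈ Set.Icc (0:ℝ) 1, 0 ≤ V ε t) ∧
      ∀ t ∈ Set.Icc (0:ℝ) 1, V ε t = 3 * ∫ s in Set.Ioc t 1, (Φ (V ε s) + ε)) :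
    TendstoUniformlyOn (fun ε t => V ε t) (fun _ => 0)
      (nhdsWithin 0 (Set.Ioi 0)) (Set.Icc 0 1) := by
  have hψc : ∀ e : ℝ, 0 < e → Continuous fun x => (3 * (Φ (max x 0) + e))⁻¹ := by
    intro e he
    have hm : Continuous fun y : ℝ => Φ (max y 0) :=
      hΦc.comp_continuous (continuous_id.max continuous_const) fun y => Set.mem_Ici.2 (le_max_right _ _)
    exact (continuous_const.mul (hm.add continuous_const)).inv₀ fun y => by
      have := hΦnn (max y 0) (le_max_right _ _); exact (mul_pos (by norm_num : (0:ℝ) < 3) (add_pos_of_nonneg_of_pos this he)).ne'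
  rw [Metric.tendstoUniformlyOn_iff]
  intro η hη
  -- Step 1: find c > 0 such that ∫_{(0,η]} (3(Φ x + c))⁻¹ > 1
  obtain ⟨c, hc, hc1⟩ :
      ∃ c > (0:ℝ), 1 < ∫ x in Set.Ioc (0:ℝ) η, (3 * (Φ (max x 0) + c))⁻¹ := by
    set μ := (volume : Measure ℝ).restrict (Set.Ioc (0:ℝ) η) with hμ
    have hΦmeas : AEMeasurable Φ μ := by
      have h1 : AEMeasurable Φ (volume.restrict (Set.Ici (0:ℝ))) :=
        hΦc.aemeasurable measurableSet_Ici
      exact h1.mono_measure (Measure.restrict_mono (fun x hx => hx.1.le) le_rfl)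
    set f : ℕ → ℝ → ENNReal := fun n x => ENNReal.ofReal ((3 * (Φ x + ((n:ℝ)+1)⁻¹))⁻¹) with hf
    have hfmeas : ∀ n, AEMeasurable (f n) μ := by
      intro n
      exact ENNReal.measurable_ofReal.comp_aemeasurable
        (((hΦmeas.add aemeasurable_const).const_mul 3).inv)
    have hmem : ∀ᵐ x ∂μ, x ∈ Set.Ioc (0:ℝ) η := ae_restrict_mem measurableSet_Ioc
    have hmono : ∀ᵐ x ∂μ, Monotone fun n => f n x := by
      filter_upwards [hmem] with x hx
      intro m n hmn
      have hΦx : 0 < Φ x := hΦpos x hx.1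
      apply ENNReal.ofReal_le_ofReal
      have h1 : (0:ℝ) < 3 * (Φ x + ((n:ℝ)+1)⁻¹) := by positivity
      apply inv_anti₀ h1
      have : ((n:ℝ)+1)⁻¹ ≤ ((m:ℝ)+1)⁻¹ := by
        apply inv_anti₀ (by positivity)
        linarith [(Nat.cast_le (α := ℝ)).2 hmn]
      nlinarith
    have hsup : ∫⁻ x, ⨆ n, f n x ∂μ = ⨆ n, ∫⁻ x, f n x ∂μ := lintegral_iSup' hfmeas hmono
    have hptsup : ∀ᵐ x ∂μ, (⨆ n, f n x) = ENNReal.ofReal ((3 * Φ x)⁻¹) := by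
      filter_upwards [hmem] with x hx
      have hΦx : 0 < Φ x := hΦpos x hx.1
      have htend : Filter.Tendsto (fun n : ℕ => f n x) atTop
          (𝓝 (ENNReal.ofReal ((3 * Φ x)⁻¹))) := by
        apply ENNReal.continuous_ofReal.continuousAt.tendsto.comp
        have h1 : Filter.Tendsto (fun n : ℕ => ((n:ℝ)+1)⁻¹) atTop (𝓝 0) := by
          simpa only [one_div] using (tendsto_one_div_add_atTop_nhds_zero_nat : Tendsto (fun n : ℕ => 1 / ((n:ℝ)+1)) atTop (𝓝 0))
        have h2 : Filter.Tendsto (fun n : ℕ => 3 * (Φ x + ((n:ℝ)+1)⁻¹)) atTop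
            (𝓝 (3 * (Φ x + 0))) := (tendsto_const_nhds.add h1).const_mul 3
        rw [add_zero] at h2
        exact h2.inv₀ (by positivity)
      have hmx : Monotone fun n : ℕ => f n x := by
        intro m n hmn
        apply ENNReal.ofReal_le_ofReal
        apply inv_anti₀ (by positivity)
        have : ((n:ℝ)+1)⁻¹ ≤ ((m:ℝ)+1)⁻¹ := by
          apply inv_anti₀ (by positivity)
          linarith [(Nat.cast_le (α := ℝ)).2 hmn]
        nlinarith
      exact tendsto_nhds_unique (tendsto_atTop_iSup hmx) htend
    have htop : ∫⁻ x, ENNReal.ofReal ((3 * Φ x)⁻¹) ∂μ = ⊤ := by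
      have hcongr : ∀ᵐ x ∂μ, ENNReal.ofReal ((3 * Φ x)⁻¹)
          = ENNReal.ofReal (3⁻¹ : ℝ) * ENNReal.ofReal (1 / Φ x) := by
        filter_upwards [hmem] with x hx
        have hΦx : 0 < Φ x := hΦpos x hx.1
        rw [← ENNReal.ofReal_mul (by norm_num)]
        congr 1
        field_simp
      rw [lintegral_congr_ae hcongr, lintegral_const_mul' _ _ (by simp),
        hμ, hΦOsg η hη, ENNReal.mul_top (by simp)]
    have hsup_top : (⨆ n, ∫⁻ x, f n x ∂μ) = ⊤ := by
      rw [← hsup, lintegral_congr_ae hptsup, htop]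
    obtain ⟨n, hn⟩ : ∃ n, (1:ℝ≥0∞) < ∫⁻ x, f n x ∂μ := by
      by_contra hcon
      push_neg at hcon
      have : (⨆ n, ∫⁻ x, f n x ∂μ) ≤ 1 := iSup_le hcon
      rw [hsup_top] at this
      exact absurd this (by simp)
    set L := ∫⁻ x, f n x ∂μ with hL
    have hLne : L ≠ ⊤ := by
      have hbound : L ≤ ∫⁻ _ , ENNReal.ofReal ((3 * ((n:ℝ)+1)⁻¹)⁻¹) ∂μ := by
        apply lintegral_mono_ae
        filter_upwards [hmem] with x hx
        apply ENNReal.ofReal_le_ofReal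
        apply inv_anti₀ (by positivity)
        have := hΦnn x hx.1.le
        nlinarith
      rw [lintegral_const, hμ, Measure.restrict_apply_univ] at hbound
      refine ne_top_of_le_ne_top ?_ hbound
      exact ENNReal.mul_ne_top ENNReal.ofReal_ne_top (by
        rw [Real.volume_Ioc]; exact ENNReal.ofReal_ne_top)
    have hreal : ∫ x in Set.Ioc (0:ℝ) η, (3 * (Φ x + ((n:ℝ)+1)⁻¹))⁻¹ = L.toReal := by
      rw [hL, hf]
      apply integral_eq_lintegral_of_nonneg_ae
      · filter_upwards [hmem] with x hx
        have := hΦnn x hx.1.le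
        positivity
      · exact (((hΦmeas.add aemeasurable_const).const_mul 3).inv).aestronglyMeasurable
    refine ⟨((n:ℝ)+1)⁻¹, by positivity, ?_⟩
    have hcongr2 : ∫ x in Set.Ioc (0:ℝ) η, (3 * (Φ (max x 0) + ((n:ℝ)+1)⁻¹))⁻¹
        = ∫ x in Set.Ioc (0:ℝ) η, (3 * (Φ x + ((n:ℝ)+1)⁻¹))⁻¹ := by
      apply setIntegral_congr_fun measurableSet_Ioc
      intro x hx
      simp [max_eq_left hx.1.le]
    rw [hcongr2, hreal]
    have := (ENNReal.toReal_lt_toReal (by simp) hLne).2 hn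
    simpa using this
  -- Step 2: conclude
  filter_upwards [Ioc_mem_nhdsGT_of_mem ⟨le_refl 0, hc⟩] with ε hε t ht
  obtain ⟨hεpos, hεc⟩ := hε
  obtain ⟨huc, hunn, heq⟩ := hV ε hεpos
  obtain ⟨hmono, hint⟩ := stmt16_key Φ hΦc hΦnn ε hεpos (V ε) huc hunn heq
  have h0 : V ε 0 < η := by
    by_contra hge
    push_neg at hge
    have hle1 : ∫ x in Set.Ioc (0:ℝ) η, (3 * (Φ (max x 0) + ε))⁻¹ ≤ 1 := by
      rw [← hint]
      apply setIntegral_mono_set ((hψc ε hεpos).integrableOn_Ioc)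
      · exact Filter.Eventually.of_forall fun x => by
          have := hΦnn (max x 0) (le_max_right _ _); positivity
      · exact HasSubset.Subset.eventuallyLE (Set.Ioc_subset_Ioc_right hge)
    have hcε : ∫ x in Set.Ioc (0:ℝ) η, (3 * (Φ (max x 0) + c))⁻¹
        ≤ ∫ x in Set.Ioc (0:ℝ) η, (3 * (Φ (max x 0) + ε))⁻¹ := by
      apply setIntegral_mono_on ((hψc c hc).integrableOn_Ioc)
        ((hψc ε hεpos).integrableOn_Ioc) measurableSet_Ioc
      intro x hx
      have hn0 := hΦnn (max x 0) (le_max_right _ _)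
      apply inv_anti₀ (by positivity)
      nlinarith
    linarith
  have h1 := hmono t ht
  have h2 := hunn t ht
  rw [Real.dist_eq]
  rw [zero_sub, abs_neg, abs_of_nonneg h2]
  linarith
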